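/- For any α, β ∈ ℝ one has ‖R_x(α)·R_y(β) − Id‖ ≤ √(α² + β²), with equality only for α = β = 0. -/

import Mathlib

noncomputable section

open Real

/-- A matrix acting on Euclidean space. -/
def act {m n : ℕ} (A : Matrix (Fin m) (Fin n) ℝ) (v : EuclideanSpace ℝ (Fin n)) :
    EuclideanSpace ℝ (Fin m) :=
  Matrix.toEuclideanLin A v

/-- Operator norm of a real matrix with respect to the Euclidean norms. -/
def opNorm {m n : ℕ} (A : Matrix (Fin m) (Fin n) ℝ) : ℝ :=
  ‖LinearMap.toContinuousLinearMap (Matrix.toEuclideanLin A)‖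

/-- The 2×2 rotation matrix by angle `α`. -/
def R (α : ℝ) : Matrix (Fin 2) (Fin 2) ℝ :=
  !![cos α, -sin α; sin α, cos α]

/-- The orthogonal projection matrix in direction `X θ φ`. -/
def M (θ φ : ℝ) : Matrix (Fin 2) (Fin 3) ℝ :=
  !![-sin θ, cos θ, 0; -cos θ * cos φ, -sin θ * cos φ, sin φ]

/-- The unit vector parametrized by spherical coordinates. -/
def X (θ φ : ℝ) : EuclideanSpace ℝ (Fin 3) :=
  (WithLp.equiv 2 (Fin 3 → ℝ)).symm ![cos θ * sin φ, sin θ * sin φ, cos φ]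

/-- Rotation about the x-axis. -/
def Rx (α : ℝ) : Matrix (Fin 3) (Fin 3) ℝ :=
  !![1, 0, 0; 0, cos α, -sin α; 0, sin α, cos α]

/-- Rotation about the y-axis. -/
def Ry (α : ℝ) : Matrix (Fin 3) (Fin 3) ℝ :=
  !![cos α, 0, -sin α; 0, 1, 0; sin α, 0, cos α]

/-- Rotation about the z-axis. -/
def Rz (α : ℝ) : Matrix (Fin 3) (Fin 3) ℝ :=
  !![cos α, -sin α, 0; sin α, cos α, 0; 0, 0, 1]


private lemma key1 (c1 s1 c2 s2 x y z : ℝ) (h1 : s1^2 + c1^2 = 1) (h2 : s2^2 + c2^2 = 1) :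
    (1+c1)*(1+c2)*((3-c1-c2-c1*c2)*(x^2+y^2+z^2) -
      ((c2*x - s2*z - x)^2 + (c1*y - s1*s2*x - s1*c2*z - y)^2 +
        (c1*s2*x + s1*y + c1*c2*z - z)^2)) =
    (s1*(1+c2)*x - s2*(1+c1)*y - s1*s2*z)^2 := by
  linear_combination ((-1)*y^2 + (-1)*x^2 + 2*s2*x*z + (-1)*s2^2*z^2 + (-1)*s2^2*x^2 + (-1)*c2*y^2 + (-2)*c2*x^2 + (-1)*c2*s2^2*x^2 + (-1)*c2^2*z^2 + (-1)*c2^2*x^2 + (-2)*c2^2*s2*x*z + (-1)*c2^3*z^2 + (-1)*c1*y^2 + (-1)*c1*s2^2*x^2 + (-1)*c1*c2*y^2 + (-2)*c1*c2*s2*x*z + (-1)*c1*c2*s2^2*x^2 + (-1)*c1*c2^2*z^2 + (-2)*c1*c2^2*s2*x*z + (-1)*c1*c2^3*z^2) * h1 + ((-2)*z^2 + (-1)*y^2 + (-1)*x^2 + (-1)*c2*z^2 + (-1)*c2*x^2 + (-2)*s1*y*z + (-1)*c1*z^2 + (-2)*c1*y^2 + (-1)*c1*x^2 + (-1)*c1*c2*z^2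 + (-1)*c1*c2*x^2 + (-2)*c1*s1*y*z + c1^2*z^2 + (-1)*c1^2*y^2) * h2

private lemma key2 (c1 s1 c2 s2 x y z : ℝ) (h1 : s1^2 + c1^2 = 1) (h2 : s2^2 + c2^2 = 1) :
    4*(x^2+y^2+z^2) -
      ((c2*x - s2*z - x)^2 + (c1*y - s1*s2*x - s1*c2*z - y)^2 +
        (c1*s2*x + s1*y + c1*c2*z - z)^2) =
    (c2*x + x - s2*z)^2 + (c1*y + y - (s1*s2*x + s1*c2*z))^2 +
      (c1*s2*x + (s1*y + (c1*c2*z + z)))^2 := by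
  linear_combination ((-2)*y^2 + (-2)*s2^2*x^2 + (-4)*c2*s2*x*z + (-2)*c2^2*z^2) * h1 + ((-2)*z^2 + (-2)*x^2) * h2

private lemma opNorm_le_bound3 (A : Matrix (Fin 3) (Fin 3) ℝ) {C : ℝ} (hC : 0 ≤ C)
    (h : ∀ x y z : ℝ,
      (A 0 0 * x + A 0 1 * y + A 0 2 * z) ^ 2 +
      (A 1 0 * x + A 1 1 * y + A 1 2 * z) ^ 2 +
      (A 2 0 * x + A 2 1 * y + A 2 2 * z) ^ 2 ≤ C ^ 2 * (x ^ 2 + y ^ 2 + z ^ 2)) :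
    opNorm A ≤ C := by
  apply ContinuousLinearMap.opNorm_le_bound _ hC
  intro v
  rw [EuclideanSpace.norm_eq, EuclideanSpace.norm_eq]
  simp only [LinearMap.coe_toContinuousLinearMap', Matrix.toEuclideanLin_apply,
    Fin.sum_univ_three, Real.norm_eq_abs, sq_abs]
  have hv : ∀ i, (WithLp.equiv 2 (Fin 3 → ℝ)) v i = v i := fun _ => rfl
  simp only [hv, Matrix.mulVec, dotProduct, Fin.sum_univ_three]
  rw [show C * √(v 0 ^ 2 + v 1 ^ 2 + v 2 ^ 2) = √(C ^ 2 * (v 0 ^ 2 + v 1 ^ 2 + v 2 ^ 2)) by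
    rw [Real.sqrt_mul (sq_nonneg C), Real.sqrt_sq hC]]
  exact Real.sqrt_le_sqrt (h (v 0) (v 1) (v 2))

private lemma entries (α β : ℝ) : Rx α * Ry β - 1 =
    !![cos β - 1, 0, -sin β;
       -(sin α * sin β), cos α - 1, -(sin α * cos β);
       cos α * sin β, sin α, cos α * cos β - 1] := by
  ext i j
  fin_cases i <;> fin_cases j <;>
    simp [Rx, Ry, Matrix.mul_apply, Fin.sum_univ_three, Matrix.one_apply]

private lemma two_sub_two_cos_lt {x : ℝ} (hx : x ≠ 0) : 2 - 2 * Real.cos x < x ^ 2 := by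
  nlinarith [Real.one_sub_sq_div_two_lt_cos hx]

private lemma two_sub_two_cos_le (x : ℝ) : 2 - 2 * Real.cos x ≤ x ^ 2 := by
  rcases eq_or_ne x 0 with h | h
  · simp [h]
  · exact (two_sub_two_cos_lt h).le

private lemma lam_nonneg (α β : ℝ) : 0 ≤ 3 - cos α - cos β - cos α * cos β := by
  nlinarith [Real.neg_one_le_cos α, Real.cos_le_one α, Real.neg_one_le_cos β,
    Real.cos_le_one β]

private lemma lam_le (α β : ℝ) : 3 - cos α - cos β - cos α * cos β ≤ α ^ 2 + β ^ 2 := by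
  nlinarith [two_sub_two_cos_le α, two_sub_two_cos_le β, Real.cos_le_one α,
    Real.cos_le_one β, Real.neg_one_le_cos α, Real.neg_one_le_cos β]

private lemma lam_lt {α : ℝ} (β : ℝ) (hα : α ≠ 0) :
    3 - cos α - cos β - cos α * cos β < α ^ 2 + β ^ 2 := by
  nlinarith [two_sub_two_cos_lt hα, two_sub_two_cos_le β, Real.cos_le_one α,
    Real.cos_le_one β, Real.neg_one_le_cos α, Real.neg_one_le_cos β]

private lemma lam_lt' {β : ℝ} (α : ℝ) (hβ : β ≠ 0) :
    3 - cos α - cos β - cos α * cos β < α ^ 2 + β ^ 2 := by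
  nlinarith [two_sub_two_cos_le α, two_sub_two_cos_lt hβ, Real.cos_le_one α,
    Real.cos_le_one β, Real.neg_one_le_cos α, Real.neg_one_le_cos β]

private lemma opNorm_le_two (α β : ℝ) : opNorm (Rx α * Ry β - 1) ≤ 2 := by
  rw [entries]
  apply opNorm_le_bound3 _ (by norm_num)
  intro x y z
  have h := key2 (cos α) (sin α) (cos β) (sin β) x y z (sin_sq_add_cos_sq α)
    (sin_sq_add_cos_sq β)
  simp [Matrix.cons_val_two, Matrix.tail_cons]
  nlinarith [sq_nonneg (cos β * x + x - sin β * z),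
    sq_nonneg (cos α * y + y - (sin α * sin β * x + sin α * cos β * z)),
    sq_nonneg (cos α * sin β * x + (sin α * y + (cos α * cos β * z + z)))]

private lemma opNorm_le_sqrt_lam {α β : ℝ} (hα : cos α ≠ -1) (hβ : cos β ≠ -1) :
    opNorm (Rx α * Ry β - 1) ≤ Real.sqrt (3 - cos α - cos β - cos α * cos β) := by
  rw [entries]
  apply opNorm_le_bound3 _ (Real.sqrt_nonneg _)
  intro x y z
  rw [Real.sq_sqrt (lam_nonneg α β)]
  have h := key1 (cos α) (sin α) (cos β) (sin β) x y z (sin_sq_add_cos_sq α)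
    (sin_sq_add_cos_sq β)
  have h1 : 0 < 1 + cos α := by
    rcases lt_or_eq_of_le (Real.neg_one_le_cos α) with h' | h'
    · linarith
    · exact absurd h'.symm hα
  have h2 : 0 < 1 + cos β := by
    rcases lt_or_eq_of_le (Real.neg_one_le_cos β) with h' | h'
    · linarith
    · exact absurd h'.symm hβ
  simp [Matrix.cons_val_two, Matrix.tail_cons]
  nlinarith [sq_nonneg (sin α * (1 + cos β) * x - sin β * (1 + cos α) * y - sin α * sin β * z),
    mul_pos h1 h2]

/-- Bound on the distance between a composition of two rotations and the identity. -/
theorem norm_Rx_mul_Ry_sub_id (α β : ℝ) :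
    opNorm (Rx α * Ry β - 1) ≤ Real.sqrt (α ^ 2 + β ^ 2) ∧
    (opNorm (Rx α * Ry β - 1) = Real.sqrt (α ^ 2 + β ^ 2) → α = 0 ∧ β = 0) := by
  have hbad : ∀ γ : ℝ, cos γ = -1 → 4 < γ ^ 2 := by
    intro γ hγ
    have hne : γ ≠ 0 := by
      intro h; rw [h, Real.cos_zero] at hγ; norm_num at hγ
    have := two_sub_two_cos_lt hne
    rw [hγ] at this; linarith
  by_cases hα : cos α = -1
  · have h4 : 4 < α ^ 2 + β ^ 2 := by nlinarith [hbad α hα, sq_nonneg β]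
    have hs : 2 < Real.sqrt (α ^ 2 + β ^ 2) := by
      have : Real.sqrt 4 < Real.sqrt (α ^ 2 + β ^ 2) := Real.sqrt_lt_sqrt (by norm_num) h4
      rwa [show (4 : ℝ) = 2 ^ 2 by norm_num, Real.sqrt_sq (by norm_num : (0:ℝ) ≤ 2)] at this
    exact ⟨(opNorm_le_two α β).trans hs.le,
      fun h => absurd h (by have := opNorm_le_two α β; linarith)⟩
  by_cases hβ : cos β = -1
  · have h4 : 4 < α ^ 2 + β ^ 2 := by nlinarith [hbad β hβ, sq_nonneg α]
    have hs : 2 < Real.sqrt (α ^ 2 + β ^ 2) := by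
      have : Real.sqrt 4 < Real.sqrt (α ^ 2 + β ^ 2) := Real.sqrt_lt_sqrt (by norm_num) h4
      rwa [show (4 : ℝ) = 2 ^ 2 by norm_num, Real.sqrt_sq (by norm_num : (0:ℝ) ≤ 2)] at this
    exact ⟨(opNorm_le_two α β).trans hs.le,
      fun h => absurd h (by have := opNorm_le_two α β; linarith)⟩
  have hle := opNorm_le_sqrt_lam hα hβ
  constructor
  · exact hle.trans (Real.sqrt_le_sqrt (lam_le α β))
  · intro heq
    by_contra hcon
    have hlt : 3 - cos α - cos β - cos α * cos β < α ^ 2 + β ^ 2 := by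
      rcases not_and_or.mp hcon with h | h
      · exact lam_lt β h
      · exact lam_lt' α h
    have : Real.sqrt (3 - cos α - cos β - cos α * cos β) < Real.sqrt (α ^ 2 + β ^ 2) :=
      Real.sqrt_lt_sqrt (lam_nonneg α β) hlt
    linarith [heq ▸ hle.trans_lt this]
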